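/- Let κ, γ, η ∈ ℝ with 0 ≤ ηκ < κ < γ, and let u : [0,∞) → ℝ≥0 satisfy u(s) ≤ C₁ e^{-κs} + C₂ sup_{0 ≤ τ ≤ s} e^{-ηκ(s-τ)} z(τ) for a nonnegative bounded function z and constants C₁, C₂ ≥ 0. Then there exists C > 0 (depending only on κ, γ, η, C₁, C₂) such that for all t ≥ 0: ∫₀^t e^{-γ(t-s)} u(s) ds ≤ C e^{-κt} + C sup_{0 ≤ τ ≤ t} e^{-ηκ(t-τ)} z(τ). -/
import Mathlib


open MeasureTheory Set

lemma aux_int (c t : ℝ) (hc : 0 < c) (ht : 0 ≤ t) :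
    ∫ s in (0:ℝ)..t, Real.exp (-c*(t-s)) ≤ 1/c := by
  have heq : ∀ s : ℝ, Real.exp (-c*(t-s)) = Real.exp (-c*t) * Real.exp (c*s) := by
    intro s; rw [← Real.exp_add]; ring_nf
  simp_rw [heq]
  rw [intervalIntegral.integral_const_mul]
  have hint : ∫ s in (0:ℝ)..t, Real.exp (c*s) = c⁻¹ * (Real.exp (c*t) - 1) := by
    have := intervalIntegral.integral_comp_mul_left (a := (0:ℝ)) (b := t)
      (fun x => Real.exp x) (ne_of_gt hc)
    simp [integral_exp] at this
    simp [this, smul_eq_mul]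
  rw [hint]
  have h1 : Real.exp (-c*t) * (c⁻¹ * (Real.exp (c*t) - 1))
      = c⁻¹ * (1 - Real.exp (-c*t)) := by
    have : Real.exp (-(c*t)) * Real.exp (c*t) = 1 := by
      rw [← Real.exp_add]; simp
    simp only [neg_mul]
    linear_combination c⁻¹ * this
  rw [h1, one_div]
  have := Real.exp_pos (-c*t)
  have hci : 0 < c⁻¹ := inv_pos.mpr hc
  nlinarith

theorem stmt_19 (κ γ η C₁ C₂ : ℝ)
    (hηκ : 0 ≤ η * κ) (h1 : η * κ < κ) (h2 : κ < γ)
    (hC₁ : 0 ≤ C₁) (hC₂ : 0 ≤ C₂) :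
    ∃ C > 0, ∀ u z : ℝ → ℝ,
      (∀ s : ℝ, 0 ≤ s → 0 ≤ u s) → (∀ s : ℝ, 0 ≤ z s) → (∃ Z : ℝ, ∀ s : ℝ, z s ≤ Z) →
      (∀ s : ℝ, 0 ≤ s → u s ≤ C₁ * Real.exp (-κ * s) +
        C₂ * sSup ((fun τ => Real.exp (-(η*κ)*(s-τ)) * z τ) '' Set.Icc 0 s)) →
      ∀ t : ℝ, 0 ≤ t →
        (∫ s in (0:ℝ)..t, Real.exp (-γ*(t-s)) * u s) ≤
          C * Real.exp (-κ * t) +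
          C * sSup ((fun τ => Real.exp (-(η*κ)*(t-τ)) * z τ) '' Set.Icc 0 t) := by
  have ha : 0 < γ - κ := by linarith
  have hb : 0 < γ - η*κ := by linarith
  refine ⟨C₁/(γ-κ) + C₂/(γ-η*κ) + 1, by positivity, ?_⟩
  intro u z hu hz ⟨Z, hZ⟩ hub t ht
  set C := C₁/(γ-κ) + C₂/(γ-η*κ) + 1 with hCdef
  have hCa : C₁/(γ-κ) ≤ C := by
    have : 0 ≤ C₂/(γ-η*κ) := by positivity
    linarith
  have hCb : C₂/(γ-η*κ) ≤ C := by
    have : 0 ≤ C₁/(γ-κ) := by positivity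
    linarith
  set St := sSup ((fun τ => Real.exp (-(η*κ)*(t-τ)) * z τ) '' Set.Icc 0 t) with hStdef
  -- boundedness of the t-image
  have hbdd : BddAbove ((fun τ => Real.exp (-(η*κ)*(t-τ)) * z τ) '' Set.Icc 0 t) := by
    refine ⟨max Z 0, ?_⟩
    rintro x ⟨τ, hτ, rfl⟩
    have h1' : Real.exp (-(η*κ)*(t-τ)) ≤ 1 := by
      rw [Real.exp_le_one_iff]
      have : 0 ≤ t - τ := by linarith [hτ.2]
      nlinarith
    have := hz τ
    calc Real.exp (-(η*κ)*(t-τ)) * z τ ≤ 1 * z τ := by nlinarith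
      _ ≤ max Z 0 := by simpa using le_max_of_le_left (hZ τ)
  have hSt0 : 0 ≤ St := by
    have hmem : Real.exp (-(η*κ)*(t-0)) * z 0 ∈
        ((fun τ => Real.exp (-(η*κ)*(t-τ)) * z τ) '' Set.Icc 0 t) :=
      ⟨0, ⟨le_refl 0, ht⟩, rfl⟩
    have := le_csSup hbdd hmem
    have h0 : 0 ≤ Real.exp (-(η*κ)*(t-0)) * z 0 := mul_nonneg (Real.exp_pos _).le (hz 0)
    linarith
  -- the pointwise dominating function
  set g : ℝ → ℝ := fun s =>
    C₁ * Real.exp (-κ*t) * Real.exp (-(γ-κ)*(t-s)) + C₂ * St * Real.exp (-(γ-η*κ)*(t-s))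
    with hgdef
  have hgcont : Continuous g := by fun_prop
  have hptwise : ∀ s ∈ Set.Icc (0:ℝ) t, Real.exp (-γ*(t-s)) * u s ≤ g s := by
    intro s hs
    have hs0 := hs.1
    have hst := hs.2
    have hSs : sSup ((fun τ => Real.exp (-(η*κ)*(s-τ)) * z τ) '' Set.Icc 0 s)
        ≤ Real.exp ((η*κ)*(t-s)) * St := by
      apply csSup_le (Set.Nonempty.image _ (Set.nonempty_Icc.mpr hs0))
      rintro x ⟨τ, hτ, rfl⟩
      have hmem : Real.exp (-(η*κ)*(t-τ)) * z τ ∈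
          ((fun τ => Real.exp (-(η*κ)*(t-τ)) * z τ) '' Set.Icc 0 t) :=
        ⟨τ, ⟨hτ.1, le_trans hτ.2 hst⟩, rfl⟩
      have hle := le_csSup hbdd hmem
      have hexp : Real.exp (-(η*κ)*(s-τ)) =
          Real.exp ((η*κ)*(t-s)) * Real.exp (-(η*κ)*(t-τ)) := by
        rw [← Real.exp_add]; ring_nf
      show Real.exp (-(η*κ)*(s-τ)) * z τ ≤ _
      rw [hexp, mul_assoc]
      have := Real.exp_pos ((η*κ)*(t-s))
      nlinarith
    have hub' := hub s hs0
    have hE : 0 < Real.exp (-γ*(t-s)) := Real.exp_pos _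
    have step1 : Real.exp (-γ*(t-s)) * u s ≤
        Real.exp (-γ*(t-s)) * (C₁ * Real.exp (-κ * s)
          + C₂ * (Real.exp ((η*κ)*(t-s)) * St)) := by
      have hC₂Ss : C₂ * sSup ((fun τ => Real.exp (-(η*κ)*(s-τ)) * z τ) '' Set.Icc 0 s)
          ≤ C₂ * (Real.exp ((η*κ)*(t-s)) * St) := by nlinarith
      nlinarith
    refine step1.trans (le_of_eq ?_)
    simp only [hgdef]
    have e1 : Real.exp (-γ*(t-s)) * Real.exp (-κ * s)
        = Real.exp (-κ*t) * Real.exp (-(γ-κ)*(t-s)) := by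
      rw [← Real.exp_add, ← Real.exp_add]; ring_nf
    have e2 : Real.exp (-γ*(t-s)) * Real.exp ((η*κ)*(t-s))
        = Real.exp (-(γ-η*κ)*(t-s)) := by
      rw [← Real.exp_add]; ring_nf
    linear_combination C₁ * e1 + C₂ * St * e2
  by_cases hInt : IntervalIntegrable (fun s => Real.exp (-γ*(t-s)) * u s) volume 0 t
  · have hgInt : IntervalIntegrable g volume 0 t := hgcont.intervalIntegrable 0 t
    have hmono := intervalIntegral.integral_mono_on ht hInt hgInt hptwise
    have hgint : (∫ s in (0:ℝ)..t, g s)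
        = C₁ * Real.exp (-κ*t) * (∫ s in (0:ℝ)..t, Real.exp (-(γ-κ)*(t-s)))
          + C₂ * St * (∫ s in (0:ℝ)..t, Real.exp (-(γ-η*κ)*(t-s))) := by
      simp only [hgdef]
      rw [intervalIntegral.integral_add, intervalIntegral.integral_const_mul,
        intervalIntegral.integral_const_mul]
      · exact (Continuous.intervalIntegrable (by fun_prop) 0 t)
      · exact (Continuous.intervalIntegrable (by fun_prop) 0 t)
    have hi1 := aux_int (γ-κ) t ha ht
    have hi2 := aux_int (γ-η*κ) t hb ht
    have hi1' : 0 ≤ ∫ s in (0:ℝ)..t, Real.exp (-(γ-κ)*(t-s)) :=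
      intervalIntegral.integral_nonneg ht (fun s _ => (Real.exp_pos _).le)
    have hi2' : 0 ≤ ∫ s in (0:ℝ)..t, Real.exp (-(γ-η*κ)*(t-s)) :=
      intervalIntegral.integral_nonneg ht (fun s _ => (Real.exp_pos _).le)
    have hEt : 0 < Real.exp (-κ*t) := Real.exp_pos _
    have key : (∫ s in (0:ℝ)..t, g s) ≤ C * Real.exp (-κ*t) + C * St := by
      rw [hgint]
      have t1 : C₁ * Real.exp (-κ*t) * (∫ s in (0:ℝ)..t, Real.exp (-(γ-κ)*(t-s)))
          ≤ C * Real.exp (-κ*t) := by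
        have h3 : C₁ * (1/(γ-κ)) ≤ C := by rw [mul_one_div]; exact hCa
        calc C₁ * Real.exp (-κ*t) * (∫ s in (0:ℝ)..t, Real.exp (-(γ-κ)*(t-s)))
            ≤ C₁ * Real.exp (-κ*t) * (1/(γ-κ)) :=
              mul_le_mul_of_nonneg_left hi1 (mul_nonneg hC₁ hEt.le)
          _ = C₁ * (1/(γ-κ)) * Real.exp (-κ*t) := by ring
          _ ≤ C * Real.exp (-κ*t) := mul_le_mul_of_nonneg_right h3 hEt.le
      have t2 : C₂ * St * (∫ s in (0:ℝ)..t, Real.exp (-(γ-η*κ)*(t-s))) ≤ C * St := by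
        have h3 : C₂ * (1/(γ-η*κ)) ≤ C := by rw [mul_one_div]; exact hCb
        calc C₂ * St * (∫ s in (0:ℝ)..t, Real.exp (-(γ-η*κ)*(t-s)))
            ≤ C₂ * St * (1/(γ-η*κ)) :=
              mul_le_mul_of_nonneg_left hi2 (mul_nonneg hC₂ hSt0)
          _ = C₂ * (1/(γ-η*κ)) * St := by ring
          _ ≤ C * St := mul_le_mul_of_nonneg_right h3 hSt0
      linarith
    exact hmono.trans key
  · rw [intervalIntegral.integral_undef hInt]
    have hC : 0 < C := by positivity
    have := Real.exp_pos (-κ*t)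
    nlinarith
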